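/- With Z nonnegative, σ > 0, pmax > 0, and Z_j = Z + (1/pmax)σ e_jᵀ: if p > 0 satisfies p = γ(Zp + σ) with max_n p_n = pmax attained at index k, then for every j ∈ {1,…,N}, Z_j p ≤ Z_k p = (1/γ) p componentwise, and consequently ρ(Z_j) ≤ ρ(Z_k) = 1/γ for all j. -/

import Mathlib

open Matrix

/-- The spectral radius of a real square matrix: the supremum of the moduli of its
complex eigenvalues. -/
noncomputable def specRad {N : ℕ} (A : Matrix (Fin N) (Fin N) ℝ) : ℝ :=
  sSup {r : ℝ | ∃ μ : ℂ, μ ∈ spectrum ℂ (A.map (fun x : ℝ => (x : ℂ))) ∧ r = ‖μ‖}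

/-- Collatz–Wielandt upper bound: if `A ≥ 0`, `p > 0` and `A p ≤ λ p`, then every complex
eigenvalue of `A` has modulus at most `λ`. -/
lemma eig_abs_le {N : ℕ} (A : Matrix (Fin N) (Fin N) ℝ) (hA : ∀ i j, 0 ≤ A i j)
    (p : Fin N → ℝ) (hp : ∀ i, 0 < p i) (lam : ℝ) (hAp : ∀ i, (A *ᵥ p) i ≤ lam * p i)
    (μ : ℂ) (hμ : μ ∈ spectrum ℂ (A.map (fun x : ℝ => (x : ℂ)))) : ‖μ‖ ≤ lam := by
  rw [← AlgEquiv.spectrum_eq (Matrix.toLinAlgEquiv' : Matrix (Fin N) (Fin N) ℂ ≃ₐ[ℂ] _),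
    ← Module.End.hasEigenvalue_iff_mem_spectrum] at hμ
  obtain ⟨x, hx⟩ := hμ.exists_hasEigenvector
  have hxne : x ≠ 0 := hx.right
  have heig : (A.map (fun x : ℝ => (x : ℂ))) *ᵥ x = μ • x := by
    have := hx.apply_eq_smul
    simpa [Matrix.toLinAlgEquiv'_apply] using this
  -- some coordinate is nonzero
  obtain ⟨m, hm⟩ := Function.ne_iff.mp hxne
  -- pick index maximizing |x i| / p i
  obtain ⟨i, -, hi⟩ := Finset.exists_max_image Finset.univ
    (fun j => ‖x j‖ / p j) ⟨m, Finset.mem_univ m⟩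
  have hxi : 0 < ‖x i‖ := by
    have h1 : 0 < ‖x m‖ / p m :=
      div_pos (by simpa using hm) (hp m)
    have h2 := hi m (Finset.mem_univ m)
    by_contra h
    push_neg at h
    have : ‖x i‖ = 0 := le_antisymm h (norm_nonneg _)
    rw [this] at h2
    simp only [zero_div] at h2
    exact absurd (lt_of_lt_of_le h1 h2) (lt_irrefl 0)
  have hbound : ∀ j, ‖x j‖ ≤ (‖x i‖ / p i) * p j := by
    intro j
    have := hi j (Finset.mem_univ j)
    calc ‖x j‖ = (‖x j‖ / p j) * p j :=
          (div_mul_cancel₀ _ (hp j).ne').symm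
      _ ≤ (‖x i‖ / p i) * p j :=
          mul_le_mul_of_nonneg_right this (le_of_lt (hp j))
  set c := ‖x i‖ / p i with hc
  have hcpos : 0 < c := div_pos hxi (hp i)
  have heigi : ((A.map (fun x : ℝ => (x : ℂ))) *ᵥ x) i = μ * x i := congrFun heig i
  have key : ‖μ‖ * ‖x i‖ ≤ c * (lam * p i) := by
    have h1 : ‖μ * x i‖ ≤ ∑ j, A i j * ‖x j‖ := by
      rw [← heigi]
      simp only [Matrix.mulVec, dotProduct, Matrix.map_apply]
      refine le_trans (norm_sum_le _ _) ?_
      apply Finset.sum_le_sum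
      intro j _
      rw [norm_mul]
      simp [Complex.norm_real, abs_of_nonneg (hA i j)]
    have h2 : ∑ j, A i j * ‖x j‖ ≤ c * (A *ᵥ p) i := by
      rw [Matrix.mulVec, dotProduct, Finset.mul_sum]
      apply Finset.sum_le_sum
      intro j _
      calc A i j * ‖x j‖ ≤ A i j * (c * p j) :=
            mul_le_mul_of_nonneg_left (hbound j) (hA i j)
        _ = c * (A i j * p j) := by ring
    have h3 : c * (A *ᵥ p) i ≤ c * (lam * p i) :=
      mul_le_mul_of_nonneg_left (hAp i) (le_of_lt hcpos)
    calc ‖μ‖ * ‖x i‖ = ‖μ * x i‖ := (norm_mul _ _).symm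
      _ ≤ ∑ j, A i j * ‖x j‖ := h1
      _ ≤ c * (A *ᵥ p) i := h2
      _ ≤ c * (lam * p i) := h3
  have : c * (lam * p i) = lam * ‖x i‖ := by
    rw [hc, div_mul_eq_mul_div, mul_div_assoc, mul_comm lam (p i),
      mul_div_cancel_left₀ lam (hp i).ne', mul_comm]
  rw [this] at key
  exact le_of_mul_le_mul_right (by linarith) hxi


lemma map_mulVec_ofReal {N : ℕ} (A : Matrix (Fin N) (Fin N) ℝ) (p : Fin N → ℝ) :
    (A.map (fun x : ℝ => (x : ℂ))) *ᵥ (fun i => (p i : ℂ)) = fun i => ((A *ᵥ p) i : ℂ) := by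
  funext i
  simp only [Matrix.mulVec, dotProduct, Matrix.map_apply]
  push_cast
  rfl

theorem stmt_8 {N : ℕ} (Z : Matrix (Fin N) (Fin N) ℝ) (hZ : ∀ i j, 0 ≤ Z i j)
    (σ : Fin N → ℝ) (hσ : ∀ i, 0 < σ i) (pmax : ℝ) (hpmax : 0 < pmax)
    (γ : ℝ) (hγ : 0 < γ) (p : Fin N → ℝ) (hp : ∀ i, 0 < p i)
    (hle : ∀ n, p n ≤ pmax) (k : Fin N) (hk : p k = pmax)
    (hfix : p = γ • (Z *ᵥ p + σ)) :
    (∀ j i, ((Z + pmax⁻¹ • vecMulVec σ (Pi.single j 1)) *ᵥ p) i ≤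
      ((Z + pmax⁻¹ • vecMulVec σ (Pi.single k 1)) *ᵥ p) i) ∧
    (Z + pmax⁻¹ • vecMulVec σ (Pi.single k 1)) *ᵥ p = γ⁻¹ • p ∧
    (∀ j, specRad (Z + pmax⁻¹ • vecMulVec σ (Pi.single j 1)) ≤
      specRad (Z + pmax⁻¹ • vecMulVec σ (Pi.single k 1))) ∧
    specRad (Z + pmax⁻¹ • vecMulVec σ (Pi.single k 1)) = 1 / γ := by
  have hγ' : (0:ℝ) < γ⁻¹ := inv_pos.mpr hγ
  -- componentwise formula
  have hform : ∀ (j i : Fin N),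
      ((Z + pmax⁻¹ • vecMulVec σ (Pi.single j 1)) *ᵥ p) i
        = (Z *ᵥ p) i + pmax⁻¹ * (σ i * p j) := by
    intro j i
    rw [Matrix.add_mulVec, Pi.add_apply, Matrix.smul_mulVec, Pi.smul_apply,
      smul_eq_mul]
    congr 1
    congr 1
    simp only [Matrix.mulVec, dotProduct, Matrix.vecMulVec_apply,
      Pi.single_apply, mul_ite, mul_one, mul_zero, ite_mul, zero_mul]
    rw [Finset.sum_ite_eq' Finset.univ j (fun m => σ i * p m)]
    simp
  have hfix' : Z *ᵥ p + σ = γ⁻¹ • p := by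
    have h2 : γ⁻¹ • p = γ⁻¹ • (γ • (Z *ᵥ p + σ)) := by rw [← hfix]
    rw [h2, smul_smul, inv_mul_cancel₀ hγ.ne', one_smul]
  -- part 1: comparison
  have part1 : ∀ j i, ((Z + pmax⁻¹ • vecMulVec σ (Pi.single j 1)) *ᵥ p) i ≤
      ((Z + pmax⁻¹ • vecMulVec σ (Pi.single k 1)) *ᵥ p) i := by
    intro j i
    rw [hform j i, hform k i]
    have : σ i * p j ≤ σ i * p k := by
      apply mul_le_mul_of_nonneg_left _ (hσ i).le
      rw [hk]; exact hle j
    have := mul_le_mul_of_nonneg_left this (inv_pos.mpr hpmax).le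
    linarith
  -- part 2: equality at k
  have part2 : (Z + pmax⁻¹ • vecMulVec σ (Pi.single k 1)) *ᵥ p = γ⁻¹ • p := by
    funext i
    have h1 : pmax⁻¹ * (σ i * pmax) = σ i := by
      rw [mul_comm (σ i) pmax, ← mul_assoc, inv_mul_cancel₀ hpmax.ne', one_mul]
    rw [hform k i, hk, h1]
    have := congrFun hfix' i
    simpa using this
  refine ⟨part1, part2, ?_⟩
  -- nonnegativity of all the perturbed matrices
  have hnn : ∀ (j a b : Fin N), 0 ≤ (Z + pmax⁻¹ • vecMulVec σ (Pi.single j 1)) a b := by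
    intro j a b
    simp only [Matrix.add_apply, Matrix.smul_apply, Matrix.vecMulVec_apply, smul_eq_mul,
      Pi.single_apply]
    have : (0:ℝ) ≤ σ a * (if b = j then (1:ℝ) else 0) := by
      by_cases h : b = j <;> simp [h, (hσ a).le]
    have := mul_nonneg (inv_pos.mpr hpmax).le this
    linarith [hZ a b]
  -- upper bound for Z_j : Z_j p ≤ γ⁻¹ p
  have hub : ∀ (j i : Fin N),
      ((Z + pmax⁻¹ • vecMulVec σ (Pi.single j 1)) *ᵥ p) i ≤ γ⁻¹ * p i := by
    intro j i
    calc ((Z + pmax⁻¹ • vecMulVec σ (Pi.single j 1)) *ᵥ p) i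
        ≤ ((Z + pmax⁻¹ • vecMulVec σ (Pi.single k 1)) *ᵥ p) i := part1 j i
      _ = γ⁻¹ * p i := by rw [part2]; simp
  -- every eigenvalue of every Z_j has modulus ≤ γ⁻¹
  have habs : ∀ (j : Fin N) (μ : ℂ),
      μ ∈ spectrum ℂ ((Z + pmax⁻¹ • vecMulVec σ (Pi.single j 1)).map
        (fun x : ℝ => (x : ℂ))) → ‖μ‖ ≤ γ⁻¹ := fun j μ hμ =>
    eig_abs_le _ (hnn j) p hp γ⁻¹ (hub j) μ hμ
  -- γ⁻¹ is an eigenvalue of Z_k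
  have hmem : ((γ⁻¹ : ℝ) : ℂ) ∈ spectrum ℂ
      ((Z + pmax⁻¹ • vecMulVec σ (Pi.single k 1)).map (fun x : ℝ => (x : ℂ))) := by
    rw [← AlgEquiv.spectrum_eq (Matrix.toLinAlgEquiv' : Matrix (Fin N) (Fin N) ℂ ≃ₐ[ℂ] _),
      ← Module.End.hasEigenvalue_iff_mem_spectrum]
    refine Module.End.hasEigenvalue_of_hasEigenvector
      (x := fun i => (p i : ℂ)) ⟨Module.End.mem_eigenspace_iff.mpr ?_, ?_⟩
    · rw [Matrix.toLinAlgEquiv'_apply, map_mulVec_ofReal, part2]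
      funext i
      push_cast
      simp
    · intro h
      have := congrFun h k
      simp only [Pi.zero_apply, Complex.ofReal_eq_zero] at this
      exact (hp k).ne' this
  set Sk := {r : ℝ | ∃ μ : ℂ, μ ∈ spectrum ℂ
      ((Z + pmax⁻¹ • vecMulVec σ (Pi.single k 1)).map (fun x : ℝ => (x : ℂ))) ∧
      r = ‖μ‖} with hSk
  have hmemSk : γ⁻¹ ∈ Sk :=
    ⟨((γ⁻¹ : ℝ) : ℂ), hmem, by rw [Complex.norm_real, Real.norm_eq_abs, abs_of_pos hγ']⟩
  have hspecK : specRad (Z + pmax⁻¹ • vecMulVec σ (Pi.single k 1)) = γ⁻¹ := by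
    unfold specRad
    refine le_antisymm (Real.sSup_le ?_ hγ'.le) (le_csSup ⟨γ⁻¹, ?_⟩ hmemSk)
    · rintro r ⟨μ, hμ, rfl⟩
      exact habs k μ hμ
    · rintro r ⟨μ, hμ, rfl⟩
      exact habs k μ hμ
  constructor
  · intro j
    rw [hspecK]
    apply Real.sSup_le _ hγ'.le
    rintro r ⟨μ, hμ, rfl⟩
    exact habs j μ hμ
  · rw [hspecK, one_div]
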